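/- Let A : Matrix (Fin n) (Fin n) ℝ with fill relation F, let i : Fin n be such that the set {j : i < j ∧ F i j} is nonempty, and let parent i be its least element. Then for every j with i < j and F i j and j ≠ parent i, one has parent i < j and F (parent i) j. -/

import Mathlib

/-- The undirected graph `G(A)` of a square real matrix `A`: `i` is adjacent to `j` iff
`i ≠ j` and (`A i j ≠ 0` or `A j i ≠ 0`). -/
def graphOf {n : ℕ} (A : Matrix (Fin n) (Fin n) ℝ) : SimpleGraph (Fin n) where
  Adj i j := i ≠ j ∧ (A i j ≠ 0 ∨ A j i ≠ 0)
  symm := by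
    constructor
    intro i j h
    exact ⟨h.1.symm, h.2.symm⟩
  loopless := by
    constructor
    intro i h
    exact h.1 rfl

/-- The fill relation of `A`: `fill A i j` iff `i ≠ j` and there is a walk from `i` to
`j` in `G(A)` all of whose interior vertices `u` satisfy `u < i` and `u < j`. -/
def fill {n : ℕ} (A : Matrix (Fin n) (Fin n) ℝ) (i j : Fin n) : Prop :=
  i ≠ j ∧ ∃ w : (graphOf A).Walk i j, ∀ u ∈ w.support.tail.dropLast, u < i ∧ u < j

open SimpleGraph


lemma mem_interior_append {V : Type*} {G : SimpleGraph V} {a b c : V}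
    (w1 : G.Walk a b) (w2 : G.Walk b c) {u : V}
    (h : u ∈ ((w1.append w2).support.tail.dropLast)) :
    u ∈ w1.support.tail.dropLast ∨ u = b ∨ u ∈ w2.support.tail.dropLast := by
  rw [Walk.tail_support_append] at h
  by_cases h2 : w2.support.tail = []
  · rw [h2, List.append_nil] at h
    exact Or.inl h
  · rw [List.dropLast_append_of_ne_nil h2] at h
    rcases List.mem_append.1 h with h1 | h1
    · by_cases hn : w1.support.tail = []
      · rw [hn] at h1; exact absurd h1 (List.not_mem_nil (a := u))
      · have hb : (w1.support.tail).getLast hn = b := by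
          have hg : w1.support.getLast? = some b := by
            rw [List.getLast?_eq_getLast (Walk.support_ne_nil _), w1.getLast_support]
          rw [w1.support_eq_cons, List.getLast?_eq_getLast (by simp),
            Option.some_inj, List.getLast_cons hn] at hg
          exact hg
        rw [← List.dropLast_append_getLast hn, List.mem_append] at h1
        rcases h1 with h1 | h1
        · exact Or.inl h1
        · rw [List.mem_singleton] at h1
          exact Or.inr (Or.inl (h1.trans hb))
    · exact Or.inr (Or.inr h1)

lemma mem_interior_reverse {V : Type*} {G : SimpleGraph V} {a b : V}
    (w : G.Walk a b) {u : V} (h : u ∈ w.reverse.support.tail.dropLast) :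
    u ∈ w.support.tail.dropLast := by
  rw [Walk.support_reverse, List.tail_reverse, List.dropLast_reverse,
    List.mem_reverse] at h
  have : w.support.tail.dropLast = w.support.dropLast.tail := by
    cases w.support with
    | nil => simp
    | cons x t => cases t with
      | nil => simp
      | cons y s => simp [List.dropLast_cons₂]
  rw [this]; exact h


/-- let `p = parent i` be the least element of the (nonempty) set
`{j | i < j ∧ fill A i j}`.  Then for every `j` with `i < j`, `fill A i j` and
`j ≠ parent i`, one has `parent i < j` and `fill A (parent i) j`. -/
theorem fill_parent_fill {n : ℕ} (A : Matrix (Fin n) (Fin n) ℝ) (i p : Fin n)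
    (hp : IsLeast {j : Fin n | i < j ∧ fill A i j} p) :
    ∀ j : Fin n, i < j → fill A i j → j ≠ p → p < j ∧ fill A p j := by
  intro j hij hfij hjp
  have hpj : p < j := lt_of_le_of_ne (hp.2 ⟨hij, hfij⟩) (Ne.symm hjp)
  refine ⟨hpj, ne_of_lt hpj, ?_⟩
  obtain ⟨hip, hfip⟩ := hp.1
  obtain ⟨_, w1, hw1⟩ := hfip
  obtain ⟨_, w2, hw2⟩ := hfij
  refine ⟨w1.reverse.append w2, ?_⟩
  intro u hu
  rcases mem_interior_append _ _ hu with h | h | h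
  · have := hw1 u (mem_interior_reverse _ h)
    exact ⟨this.2, this.1.trans hij⟩
  · subst h
    exact ⟨hip, hij⟩
  · have := hw2 u h
    exact ⟨this.1.trans hip, this.2⟩
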